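/- Let H be a complex Hilbert space. Let D : H → H be a bounded self-adjoint invertible operator, ψ ∈ H a unit vector with D ψ = λ_D • ψ for some real λ_D < 0, and ω > 0 such that Re ⟪D v, v⟫ ≥ ω ‖v‖² for every v orthogonal to ψ. Let f : ℝ → ℝ be continuous with 0 ≤ f(t) ≤ β₊ for all t ∈ ℝ. Then for every u ∈ H, Re ⟪(cfc f D)(D⁻¹ u), u⟫ ≤ (β₊/ω) ‖u‖². -/

import Mathlib

open scoped InnerProductSpace

section Aux

variable {H : Type*} [NormedAddCommGroup H] [InnerProductSpace ℂ H] [CompleteSpace H]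

/-- A self-adjoint bounded-below continuous linear map on a Hilbert space is invertible. -/
lemma aux_isUnit_of_selfAdjoint_bddBelow (A : H →L[ℂ] H) (hA : IsSelfAdjoint A)
    (c : ℝ) (hc : 0 < c) (hb : ∀ v : H, c * ‖v‖ ≤ ‖A v‖) : IsUnit A := by
  have hanti : AntilipschitzWith (⟨c, hc.le⟩ : NNReal)⁻¹ A := by
    refine A.antilipschitz_of_bound fun x => ?_
    have := hb x
    show ‖x‖ ≤ c⁻¹ * ‖A x‖
    calc ‖x‖ = c⁻¹ * (c * ‖x‖) := by field_simp
    _ ≤ c⁻¹ * ‖A x‖ := by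
        apply mul_le_mul_of_nonneg_left (hb x) (inv_nonneg.mpr hc.le)
  have hinj : Function.Injective A := hanti.injective
  have hker : LinearMap.ker (A : H →ₗ[ℂ] H) = ⊥ := by rw [LinearMap.ker_eq_bot]; exact hinj
  have hclosed : IsClosed (LinearMap.range (A : H →ₗ[ℂ] H) : Set H) := by
    rw [LinearMap.coe_range]
    exact hanti.isClosed_range A.uniformContinuous
  haveI : CompleteSpace (LinearMap.range (A : H →ₗ[ℂ] H)) := hclosed.completeSpace_coe
  have hsym0 := (ContinuousLinearMap.isSelfAdjoint_iff_isSymmetric).mp hA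
  have hsym : ∀ x y : H, ⟪A x, y⟫_ℂ = ⟪x, A y⟫_ℂ := fun x y => hsym0 x y
  have horth : (LinearMap.range (A : H →ₗ[ℂ] H))ᗮ = ⊥ := by
    rw [Submodule.eq_bot_iff]
    intro w hw
    rw [Submodule.mem_orthogonal] at hw
    have hAw : A w = 0 := by
      have h1 : ∀ v : H, ⟪v, A w⟫_ℂ = 0 := fun v => by
        rw [← hsym v w]
        exact hw (A v) ⟨v, rfl⟩
      exact inner_self_eq_zero.mp (h1 (A w))
    have : A w = A 0 := by simpa using hAw
    exact hinj this
  have hrange : LinearMap.range (A : H →ₗ[ℂ] H) = ⊤ := Submodule.orthogonal_eq_bot_iff.mp horth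
  let e := ContinuousLinearEquiv.ofBijective A hker hrange
  refine ⟨⟨A, e.symm, ?_, ?_⟩, rfl⟩
  · ext x
    show A (e.symm x) = x
    exact e.apply_symm_apply x
  · ext x
    show e.symm (A x) = x
    exact e.symm_apply_apply x

end Aux

set_option maxHeartbeats 1000000 in
/-- The bound `⟨D⁻¹ S_D P₁, P₁⟩ ≤ (β₊/ω) ‖P₁‖²` used in the proof of Theorem 2.7:
if `D` is bounded self-adjoint invertible with simple negative ground state
`D ψ = lamD • ψ` (`‖ψ‖ = 1`, `lamD < 0`) and `Re ⟪D v, v⟫ ≥ ω ‖v‖²` on `{ψ}⊥`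
(`ω > 0`), and `f : ℝ → ℝ` is continuous with `0 ≤ f ≤ βhi` (`βhi` plays the role
of β₊), then for every `u ∈ H`, `Re ⟪(cfc f D)(D⁻¹ u), u⟫ ≤ (βhi/ω) ‖u‖²`. -/
theorem cfc_Dinv_upper_bound_norm
    {H : Type*} [NormedAddCommGroup H] [InnerProductSpace ℂ H] [CompleteSpace H]
    (D Dinv : H →L[ℂ] H) (hD : IsSelfAdjoint D)
    (hD1 : D.comp Dinv = ContinuousLinearMap.id ℂ H)
    (hD2 : Dinv.comp D = ContinuousLinearMap.id ℂ H)
    (ψ : H) (hψ : ‖ψ‖ = 1) (lamD : ℝ) (hlamD : lamD < 0) (hDψ : D ψ = lamD • ψ)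
    (ω : ℝ) (hω : 0 < ω)
    (hgap : ∀ v : H, ⟪ψ, v⟫_ℂ = 0 → ω * ‖v‖ ^ 2 ≤ (⟪v, D v⟫_ℂ).re)
    (βhi : ℝ) (f : ℝ → ℝ) (hf : Continuous f)
    (hfb : ∀ t : ℝ, 0 ≤ f t ∧ f t ≤ βhi) :
    ∀ u : H, (⟪u, (cfc f D) (Dinv u)⟫_ℂ).re ≤ (βhi / ω) * ‖u‖ ^ 2 := by
  have hsym0 := (ContinuousLinearMap.isSelfAdjoint_iff_isSymmetric).mp hD
  have hsym : ∀ x y : H, ⟪D x, y⟫_ℂ = ⟪x, D y⟫_ℂ := fun x y => hsym0 x y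
  -- D is a unit with inverse Dinv
  have hDmul : D * Dinv = 1 := hD1
  have hDmul2 : Dinv * D = 1 := hD2
  have hUnit : IsUnit D := ⟨⟨D, Dinv, hDmul, hDmul2⟩, rfl⟩
  -- spectrum avoids [0, ω)
  have key : ∀ x ∈ spectrum ℝ D, x < 0 ∨ ω ≤ x := by
    intro x hx
    by_contra hcon
    push_neg at hcon
    obtain ⟨hx0, hxω⟩ := hcon
    set A : H →L[ℂ] H := algebraMap ℝ (H →L[ℂ] H) x - D with hAdef
    have hAsa : IsSelfAdjoint A := by
      refine IsSelfAdjoint.sub ?_ hD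
      exact IsSelfAdjoint.algebraMap _ (by simp [IsSelfAdjoint])
    have hAapp : ∀ v : H, A v = (x : ℂ) • v - D v := by
      intro v
      simp [hAdef, Algebra.algebraMap_eq_smul_one, ContinuousLinearMap.sub_apply]
    set c : ℝ := min (x - lamD) (ω - x) with hcdef
    have hc : 0 < c := lt_min (by linarith) (by linarith)
    have hb : ∀ v : H, c * ‖v‖ ≤ ‖A v‖ := by
      intro v
      set a : ℂ := ⟪ψ, v⟫_ℂ with hadef
      set w : H := v - a • ψ with hwdef
      have hψψ : ⟪ψ, ψ⟫_ℂ = 1 := by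
        rw [inner_self_eq_norm_sq_to_K, hψ]; norm_num
      have hw : ⟪ψ, w⟫_ℂ = 0 := by
        simp [hwdef, inner_sub_right, inner_smul_right, hψψ, hψ, hadef]
      have hDw : ⟪ψ, D w⟫_ℂ = 0 := by
        rw [← hsym ψ w, hDψ]
        rw [← Complex.coe_smul lamD ψ, inner_smul_left, hw, mul_zero]
      set Aw : H := (x : ℂ) • w - D w with hAwdef
      have hAwψ : ⟪ψ, Aw⟫_ℂ = 0 := by
        show ⟪ψ, (x : ℂ) • w - D w⟫_ℂ = 0
        rw [inner_sub_right, inner_smul_right, hw, hDw, mul_zero, sub_zero]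
      -- decomposition
      have hveq : v = a • ψ + w := by simp [hwdef]
      have hdecomp : A v = ((x : ℂ) - (lamD : ℂ)) • (a • ψ) + Aw := by
        rw [hAapp v]
        have hDv : D v = a • ((lamD : ℂ) • ψ) + D w := by
          conv_lhs => rw [hveq]
          rw [map_add, map_smul, hDψ]
          rw [← Complex.coe_smul lamD ψ]
        rw [hDv]
        conv_lhs => rw [hveq]
        rw [smul_add]
        simp only [hAwdef, sub_smul]
        rw [smul_comm (x : ℂ) a ψ]
        module
      -- orthogonality facts
      have horth1 : ⟪a • ψ, w⟫_ℂ = 0 := by rw [inner_smul_left, hw, mul_zero]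
      have horth2 : ⟪((x : ℂ) - (lamD : ℂ)) • (a • ψ), Aw⟫_ℂ = 0 := by
        rw [inner_smul_left, inner_smul_left, hAwψ]; ring
      -- Pythagoras
      have hpyth1 : ‖v‖ ^ 2 = ‖a • ψ‖ ^ 2 + ‖w‖ ^ 2 := by
        rw [hveq, @norm_add_sq ℂ, horth1]
        simp
      have hpyth2 : ‖A v‖ ^ 2 = ‖((x : ℂ) - (lamD : ℂ)) • (a • ψ)‖ ^ 2 + ‖Aw‖ ^ 2 := by
        rw [hdecomp, @norm_add_sq ℂ, horth2]
        simp
      have haψ : ‖a • ψ‖ = ‖a‖ := by rw [norm_smul, hψ, mul_one]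
      have hscal : ‖((x : ℂ) - (lamD : ℂ)) • (a • ψ)‖ = (x - lamD) * ‖a‖ := by
        rw [norm_smul, haψ]
        congr 1
        rw [show (x : ℂ) - (lamD : ℂ) = ((x - lamD : ℝ) : ℂ) by push_cast; ring]
        rw [Complex.norm_real, Real.norm_eq_abs, abs_of_pos (by linarith)]
      -- lower bound on ‖Aw‖
      have hAwlb : (ω - x) * ‖w‖ ≤ ‖Aw‖ := by
        rcases eq_or_ne w 0 with h0 | h0
        · simp [h0, hAwdef]
        · have hwpos : 0 < ‖w‖ := norm_pos_iff.mpr h0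
          have h1 : (ω - x) * ‖w‖ ^ 2 ≤ (⟪w, D w⟫_ℂ).re - x * ‖w‖ ^ 2 := by
            have := hgap w hw
            nlinarith [sq_nonneg ‖w‖]
          have h2 : (⟪w, D w⟫_ℂ).re - x * ‖w‖ ^ 2 = (-(⟪w, Aw⟫_ℂ)).re := by
            have hinner : ⟪w, Aw⟫_ℂ = (x : ℂ) * ⟪w, w⟫_ℂ - ⟪w, D w⟫_ℂ := by
              show ⟪w, (x : ℂ) • w - D w⟫_ℂ = _
              rw [inner_sub_right, inner_smul_right]
            have hre_ww : (⟪w, w⟫_ℂ).re = ‖w‖ ^ 2 := by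
              simpa using inner_self_eq_norm_sq (𝕜 := ℂ) w
            have him_ww : (⟪w, w⟫_ℂ).im = 0 := by
              rw [← RCLike.im_to_complex]; simp; exact_mod_cast Complex.ofReal_im (‖w‖ ^ 2)
            rw [hinner]
            simp only [Complex.neg_re, Complex.sub_re, Complex.mul_re,
              Complex.ofReal_re, Complex.ofReal_im, hre_ww, him_ww,
              mul_zero, sub_zero, zero_mul]
            ring
          have h3 : (-(⟪w, Aw⟫_ℂ)).re ≤ ‖⟪w, Aw⟫_ℂ‖ := by
            rw [Complex.neg_re]
            calc -(⟪w, Aw⟫_ℂ).re ≤ |(⟪w, Aw⟫_ℂ).re| := neg_le_abs _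
            _ ≤ ‖⟪w, Aw⟫_ℂ‖ := Complex.abs_re_le_norm _
          have h4 : ‖⟪w, Aw⟫_ℂ‖ ≤ ‖w‖ * ‖Aw‖ := norm_inner_le_norm w Aw
          have h5 : (ω - x) * ‖w‖ ^ 2 ≤ ‖w‖ * ‖Aw‖ := by linarith
          nlinarith
      -- combine
      have hAwnn : 0 ≤ ‖Aw‖ := norm_nonneg _
      have hcle1 : c ≤ x - lamD := min_le_left _ _
      have hcle2 : c ≤ ω - x := min_le_right _ _
      have hwnn : (0:ℝ) ≤ ‖w‖ := norm_nonneg w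
      have hann : (0:ℝ) ≤ ‖a‖ := norm_nonneg a
      have e1 : c ^ 2 * ‖a‖ ^ 2 ≤ ((x - lamD) * ‖a‖) ^ 2 := by
        have h1 : c ^ 2 ≤ (x - lamD) ^ 2 := by nlinarith
        calc c ^ 2 * ‖a‖ ^ 2 ≤ (x - lamD) ^ 2 * ‖a‖ ^ 2 :=
              mul_le_mul_of_nonneg_right h1 (sq_nonneg _)
        _ = ((x - lamD) * ‖a‖) ^ 2 := by ring
      have e2 : c ^ 2 * ‖w‖ ^ 2 ≤ ‖Aw‖ ^ 2 := by
        have h7 : c * ‖w‖ ≤ ‖Aw‖ :=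
          le_trans (mul_le_mul_of_nonneg_right hcle2 hwnn) hAwlb
        have h8 : (c * ‖w‖) ^ 2 ≤ ‖Aw‖ ^ 2 :=
          pow_le_pow_left₀ (mul_nonneg hc.le hwnn) h7 2
        calc c ^ 2 * ‖w‖ ^ 2 = (c * ‖w‖) ^ 2 := by ring
        _ ≤ ‖Aw‖ ^ 2 := h8
      have hsq : (c * ‖v‖) ^ 2 ≤ ‖A v‖ ^ 2 := by
        rw [hpyth2, hscal]
        calc (c * ‖v‖) ^ 2 = c ^ 2 * (‖a • ψ‖ ^ 2 + ‖w‖ ^ 2) := by rw [← hpyth1]; ring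
        _ = c ^ 2 * ‖a‖ ^ 2 + c ^ 2 * ‖w‖ ^ 2 := by rw [haψ]; ring
        _ ≤ ((x - lamD) * ‖a‖) ^ 2 + ‖Aw‖ ^ 2 := add_le_add e1 e2
      have h6 : 0 ≤ c * ‖v‖ := mul_nonneg hc.le (norm_nonneg _)
      nlinarith [norm_nonneg (A v), hsq, h6]
    have : IsUnit A := aux_isUnit_of_selfAdjoint_bddBelow A hAsa c hc hb
    rw [spectrum.mem_iff] at hx
    exact hx this
  -- cfc manipulations
  have hcont_inv : ContinuousOn (fun t : ℝ => t⁻¹) (spectrum ℝ D) := by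
    have := Units.continuousOn_inv₀_spectrum (R := ℝ) hUnit.unit
    rwa [hUnit.unit_spec] at this
  have hinv : cfc (fun t : ℝ => t⁻¹) D = Dinv := by
    have h1 := cfc_inv_id (R := ℝ) hUnit.unit (by rw [hUnit.unit_spec]; exact hD)
    rw [hUnit.unit_spec] at h1
    rw [h1]
    exact Units.inv_eq_of_mul_eq_one_right (by rw [hUnit.unit_spec]; exact hDmul)
  have hmul : cfc (fun t : ℝ => f t * t⁻¹) D = cfc f D * Dinv := by
    rw [cfc_mul _ _ D hf.continuousOn hcont_inv, hinv]
  have hβ : 0 ≤ βhi := le_trans (hfb 0).1 (hfb 0).2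
  -- the operator inequality
  have hle : cfc (fun t : ℝ => f t * t⁻¹) D ≤ algebraMap ℝ (H →L[ℂ] H) (βhi / ω) := by
    refine cfc_le_algebraMap _ _ _ (fun t ht => ?_) (hf.continuousOn.mul hcont_inv) hD
    rcases key t ht with hneg | hge
    · have h1 : f t * t⁻¹ ≤ 0 :=
        mul_nonpos_of_nonneg_of_nonpos (hfb t).1 (inv_nonpos.mpr hneg.le)
      exact h1.trans (div_nonneg hβ hω.le)
    · have ht0 : 0 < t := lt_of_lt_of_le hω hge
      rw [div_eq_mul_inv]
      exact mul_le_mul (hfb t).2 (inv_anti₀ hω hge) (inv_nonneg.mpr ht0.le) hβ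
  have hpos : (algebraMap ℝ (H →L[ℂ] H) (βhi / ω) -
      cfc (fun t : ℝ => f t * t⁻¹) D).IsPositive :=
    (ContinuousLinearMap.nonneg_iff_isPositive _).mp (sub_nonneg.mpr hle)
  intro u
  have h0 := hpos.inner_nonneg_right u
  have happ : (cfc f D) (Dinv u) = cfc (fun t : ℝ => f t * t⁻¹) D u := by
    rw [hmul]; rfl
  have halg : (algebraMap ℝ (H →L[ℂ] H) (βhi / ω)) u = ((βhi / ω : ℝ) : ℂ) • u := by
    rw [Complex.coe_smul]
    simp [Algebra.algebraMap_eq_smul_one]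
  rw [ContinuousLinearMap.sub_apply, inner_sub_right] at h0
  have hre : (⟪u, (algebraMap ℝ (H →L[ℂ] H) (βhi / ω)) u⟫_ℂ).re = (βhi / ω) * ‖u‖ ^ 2 := by
    rw [halg, inner_smul_right]
    have hre_uu : (⟪u, u⟫_ℂ).re = ‖u‖ ^ 2 := by
      simpa using inner_self_eq_norm_sq (𝕜 := ℂ) u
    have him_uu : (⟪u, u⟫_ℂ).im = 0 := by
      rw [← RCLike.im_to_complex]; simp; exact_mod_cast Complex.ofReal_im (‖u‖ ^ 2)
    simp only [Complex.mul_re, Complex.ofReal_re, Complex.ofReal_im,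
      hre_uu, him_uu, mul_zero, sub_zero, zero_mul]
  rw [happ]
  have h0' : 0 ≤ (⟪u, (algebraMap ℝ (H →L[ℂ] H) (βhi / ω)) u⟫_ℂ).re -
      (⟪u, cfc (fun t : ℝ => f t * t⁻¹) D u⟫_ℂ).re := by
    have := h0
    rw [Complex.le_def, Complex.zero_re, Complex.sub_re] at this; linarith [this.1]
  linarith [hre ▸ h0']
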